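/- Let ℂ^k = E ⊕ F = Ẽ ⊕ F̃ be two direct-sum decompositions into complex-linear subspaces with dim_ℂ E = dim_ℂ Ẽ, and let π̃', π̃'' be the projections onto Ẽ and F̃ associated with the second decomposition. Let a, b, κ, ε, s be positive reals with b ≤ a, ε ≤ 1 and 2κ < a. Let h : {v ∈ E : ‖v‖ < s} → F be holomorphic with h(0) = 0 and ‖h(v₁) − h(v₂)‖ ≤ ε‖v₁ − v₂‖ for all v₁, v₂, and set Γ := {v + h(v) : v ∈ E, ‖v‖ < s}. Let g be a holomorphic map from an open subset of ℂ^k containing Γ into ℂ^k, of the form g = l + r, where l is complex-linear with l(E) ⊆ Ẽ, l(F) ⊆ F̃, ‖l(v)‖ ≥ a‖v‖ for all v ∈ E and ‖l(u)‖ ≤ b‖u‖ for all u ∈ F, and where r satisfies r(0) = 0 and ‖π̃'(r(x)) − π̃'(r(y))‖ ≤ κ‖x − y‖ and ‖π̃''(r(x)) − π̃''(r(y))‖ ≤ κ‖x − y‖ for all x, y ∈ Γ. Then there exists a holomorphic map h̃ : {ṽ ∈ Ẽ : ‖ṽ‖ < (a − 2κ)s} → F̃ with h̃(0) = 0, with ‖h̃(ṽ₁)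 − h̃(ṽ₂)‖ ≤ ((bε + 2κ)/(a − 2κ))‖ṽ₁ − ṽ₂‖ for all ṽ₁, ṽ₂, and such that {ṽ + h̃(ṽ) : ṽ ∈ Ẽ, ‖ṽ‖ < (a − 2κ)s} ⊆ g(Γ). -/

import Mathlib

open Filter Asymptotics

/-- Lower bound on a derivative from a two-sided expansion estimate on an open set. -/
lemma fderiv_lower_of_expand {E F : Type*} [NormedAddCommGroup E] [NormedSpace ℂ E]
    [NormedAddCommGroup F] [NormedSpace ℂ F] {φ : E → F} {s : Set E} (hs : IsOpen s)
    {v : E} (hv : v ∈ s) {A : E →L[ℂ] F} (hA : HasFDerivAt φ A v) {c : ℝ}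
    (hexp : ∀ x ∈ s, ∀ y ∈ s, c * ‖x - y‖ ≤ ‖φ x - φ y‖) (w : E) :
    c * ‖w‖ ≤ ‖A w‖ := by
  obtain ⟨δ, hδ, hball⟩ := Metric.isOpen_iff.1 hs v hv
  have hcurve : HasDerivAt (fun t : ℝ => φ (v + t • w)) (A w) 0 := by
    have h1 : HasDerivAt (fun t : ℝ => v + t • w) w 0 := by
      simpa using ((hasDerivAt_id (0:ℝ)).smul_const w).const_add v
    have hA' : HasFDerivAt φ (A.restrictScalars ℝ) ((fun t : ℝ => v + t • w) 0) := by
      simpa using hA.restrictScalars ℝ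
    exact hA'.comp_hasDerivAt 0 h1
  have hslope := hasDerivAt_iff_tendsto_slope.1 hcurve
  have hnorm : Tendsto (fun t : ℝ => ‖slope (fun t : ℝ => φ (v + t • w)) 0 t‖)
      (nhdsWithin 0 {(0:ℝ)}ᶜ) (nhds ‖A w‖) := hslope.norm
  refine ge_of_tendsto hnorm ?_
  have hmem : ∀ᶠ t : ℝ in nhdsWithin 0 {(0:ℝ)}ᶜ, |t| * ‖w‖ < δ ∧ t ≠ 0 := by
    have h1 : ∀ᶠ t : ℝ in nhds (0:ℝ), |t| * ‖w‖ < δ := by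
      have : Continuous fun t : ℝ => |t| * ‖w‖ := by continuity
      have := this.tendsto 0
      simp only [abs_zero, zero_mul] at this
      exact this.eventually_lt_const hδ
    filter_upwards [nhdsWithin_le_nhds h1, self_mem_nhdsWithin] with t h1 h2
    exact ⟨h1, h2⟩
  filter_upwards [hmem] with t ⟨ht, ht0⟩
  have hmem' : v + t • w ∈ s := by
    apply hball
    simp only [Metric.mem_ball, dist_eq_norm]
    simpa [norm_smul, Real.norm_eq_abs] using ht
  have hexp' := hexp (v + t • w) hmem' v hv
  have habs : (0:ℝ) < |t| := abs_pos.2 ht0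
  have : ‖slope (fun t : ℝ => φ (v + t • w)) 0 t‖ = |t|⁻¹ * ‖φ (v + t • w) - φ v‖ := by
    simp [slope_def_module, norm_smul, Real.norm_eq_abs]
  rw [this]
  have h2 : c * ‖(v + t • w) - v‖ = c * (|t| * ‖w‖) := by
    simp [norm_smul, Real.norm_eq_abs]
  rw [h2] at hexp'
  calc c * ‖w‖ = |t|⁻¹ * (c * (|t| * ‖w‖)) := by field_simp
    _ ≤ |t|⁻¹ * ‖φ (v + t • w) - φ v‖ :=
        mul_le_mul_of_nonneg_left hexp' (by positivity)

/-- Differentiability of a Lipschitz right inverse of a differentiable map. -/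
lemma inverse_hasFDerivAt {E F : Type*} [NormedAddCommGroup E] [NormedSpace ℂ E]
    [NormedAddCommGroup F] [NormedSpace ℂ F] {φ : E → F} {u : F → E} {t : Set F} {vt : F}
    (ht : t ∈ nhds vt) {A : E →L[ℂ] F} {B : F →L[ℂ] E} (hBA : ∀ z, B (A z) = z)
    (hA : HasFDerivAt φ A (u vt)) (hφu : ∀ y ∈ t, φ (u y) = y) {C : ℝ}
    (hulip : ∀ y ∈ t, ‖u y - u vt‖ ≤ C * ‖y - vt‖) :
    HasFDerivAt u B vt := by
  have hvtt : vt ∈ t := mem_of_mem_nhds ht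
  have hutend : Tendsto u (nhds vt) (nhds (u vt)) := by
    rw [tendsto_iff_norm_sub_tendsto_zero]
    apply squeeze_zero' (by filter_upwards with y using norm_nonneg _)
      (by filter_upwards [ht] with y hy using hulip y hy)
    have : Continuous fun y : F => C * ‖y - vt‖ := by continuity
    simpa using this.tendsto vt
  have h1 : (fun w => φ w - φ (u vt) - A (w - u vt)) =o[nhds (u vt)] fun w => w - u vt :=
    hA.isLittleO
  have h2 := h1.comp_tendsto hutend
  have h3 : (fun y => u y - u vt) =O[nhds vt] fun y => y - vt := by
    rw [isBigO_iff]
    exact ⟨C, by filter_upwards [ht] with y hy using hulip y hy⟩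
  have h4 := h2.trans_isBigO h3
  have h5 : (fun y => y - vt - A (u y - u vt)) =o[nhds vt] fun y => y - vt := by
    refine h4.congr' ?_ EventuallyEq.rfl
    filter_upwards [ht] with y hy
    simp [Function.comp, hφu y hy, hφu vt hvtt]
  have h6 := (B.isBigO_comp _ _).trans_isLittleO h5
  have h7 : (fun y => u y - u vt - B (y - vt)) =o[nhds vt] fun y => y - vt := by
    have := h6.neg_left
    refine this.congr_left fun y => ?_
    simp only [map_sub, hBA]
    abel
  exact HasFDerivAt.of_isLittleO h7


/-- Existence of a preimage for the graph-transform map, via the contraction principle. -/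
lemma fix_aux {E' F' : Type*} [NormedAddCommGroup E'] [NormedSpace ℂ E']
    [NormedAddCommGroup F'] [NormedSpace ℂ F'] [FiniteDimensional ℂ E']
    (eL : E' ≃ₗ[ℂ] F') (ψ : E' → F') (a κ s : ℝ) (ha : 0 < a) (hκ : 0 < κ)
    (hκa : 2 * κ < a) (hs : 0 < s)
    (hsymm : ∀ w, ‖eL.symm w‖ ≤ ‖w‖ / a)
    (hψ : ∀ v₁ ∈ Metric.ball (0 : E') s, ∀ v₂ ∈ Metric.ball (0 : E') s,
      ‖ψ v₁ - ψ v₂‖ ≤ 2 * κ * ‖v₁ - v₂‖)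
    (hψ0 : ψ 0 = 0)
    (vt : F') (hvt : ‖vt‖ < (a - 2 * κ) * s) :
    ∃ v : E', ‖v‖ ≤ ‖vt‖ / (a - 2 * κ) ∧ eL v + ψ v = vt := by
  haveI : CompleteSpace E' := FiniteDimensional.complete ℂ E'
  set c : ℝ := a - 2 * κ with hc_def
  have hc : 0 < c := by rw [hc_def]; linarith
  obtain ⟨t, ht_def⟩ : ∃ t : ℝ, t = ‖vt‖ / c := ⟨_, rfl⟩
  have ht0 : 0 ≤ t := ht_def ▸ div_nonneg (norm_nonneg _) (le_of_lt hc)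
  have hts : t < s := by
    rw [ht_def, div_lt_iff₀ hc]
    linarith [hvt]
  have hct : c * t = ‖vt‖ := by
    rw [ht_def, mul_div_cancel₀ _ (ne_of_gt hc)]
  set S : Set E' := Metric.closedBall 0 t with hS_def
  haveI : CompleteSpace S := (Metric.isClosed_closedBall).completeSpace_coe
  haveI : Nonempty S := ⟨⟨0, by rw [hS_def]; simpa using ht0⟩⟩
  have hSnorm : ∀ p : S, ‖(p : E')‖ ≤ t := by
    intro p
    have h1 : dist (p : E') 0 ≤ t := p.2
    rwa [dist_zero_right] at h1
  have hSball : ∀ p : S, (p : E') ∈ Metric.ball (0 : E') s := by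
    intro p
    rw [Metric.mem_ball, dist_zero_right]
    linarith [hSnorm p]
  have h0ball : (0 : E') ∈ Metric.ball (0 : E') s := by simp [hs]
  have hψ0' : ∀ p : S, ‖ψ ↑p‖ ≤ 2 * κ * ‖(p : E')‖ := by
    intro p
    have := hψ ↑p (hSball p) 0 h0ball
    simpa [hψ0] using this
  have hTmem : ∀ p : S, eL.symm (vt - ψ ↑p) ∈ S := by
    intro p
    show dist (eL.symm (vt - ψ ↑p)) (0 : E') ≤ t
    rw [dist_zero_right]
    calc ‖eL.symm (vt - ψ ↑p)‖ ≤ ‖vt - ψ ↑p‖ / a := hsymm _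
      _ ≤ (‖vt‖ + ‖ψ ↑p‖) / a := by
          gcongr ?_ / a
          exact norm_sub_le _ _
      _ ≤ (c * t + 2 * κ * t) / a := by
          gcongr ?_ / a
          have h1 := hψ0' p
          have h2 := hSnorm p
          have h3 : 2 * κ * ‖(p : E')‖ ≤ 2 * κ * t :=
            mul_le_mul_of_nonneg_left h2 (by positivity)
          linarith [hct]
      _ = t := by rw [hc_def]; field_simp; ring
  set T : S → S := fun p => ⟨eL.symm (vt - ψ ↑p), hTmem p⟩ with hT_def
  have hcontr : ContractingWith ⟨2 * κ / a, by positivity⟩ T := by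
    constructor
    · apply NNReal.coe_lt_one.1
      show 2 * κ / a < 1
      rw [div_lt_one ha]; exact hκa
    · apply LipschitzWith.of_dist_le_mul
      intro p q
      rw [Subtype.dist_eq, Subtype.dist_eq, dist_eq_norm]
      show ‖eL.symm (vt - ψ ↑p) - eL.symm (vt - ψ ↑q)‖ ≤ _
      rw [← map_sub]
      have heq : (vt - ψ ↑p) - (vt - ψ ↑q) = ψ ↑q - ψ ↑p := by abel
      rw [heq]
      calc ‖eL.symm (ψ ↑q - ψ ↑p)‖
          ≤ ‖ψ ↑q - ψ ↑p‖ / a := hsymm _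
        _ ≤ 2 * κ * ‖(q : E') - (p : E')‖ / a := by
            gcongr ?_ / a
            exact hψ q (hSball q) p (hSball p)
        _ = 2 * κ / a * dist (p : E') (q : E') := by
            rw [dist_eq_norm, norm_sub_rev]; ring
  obtain ⟨p, hp⟩ : ∃ p : S, T p = p :=
    ⟨ContractingWith.fixedPoint T hcontr, hcontr.fixedPoint_isFixedPt⟩
  refine ⟨↑p, ht_def ▸ hSnorm p, ?_⟩
  have h1 : eL.symm (vt - ψ ↑p) = ↑p := congrArg Subtype.val hp
  have h2 : vt - ψ ↑p = eL ↑p := by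
    have := congrArg eL h1
    rwa [eL.apply_symm_apply] at this
  rw [← h2]
  abel

/-- Differentiability of the inverse of an expanding holomorphic map between
finite-dimensional complex spaces of equal dimension. -/
lemma inv_differentiableAt {E' F' : Type*} [NormedAddCommGroup E'] [NormedSpace ℂ E']
    [NormedAddCommGroup F'] [NormedSpace ℂ F'] [FiniteDimensional ℂ E'] [FiniteDimensional ℂ F']
    (hdim : Module.finrank ℂ E' = Module.finrank ℂ F')
    (φ : E' → F') (u : F' → E') (s t c : ℝ) (hc : 0 < c)
    (hφdiff : DifferentiableOn ℂ φ (Metric.ball 0 s))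
    (hexp : ∀ v₁ ∈ Metric.ball (0 : E') s, ∀ v₂ ∈ Metric.ball (0 : E') s,
      c * ‖v₁ - v₂‖ ≤ ‖φ v₁ - φ v₂‖)
    (hu : ∀ y ∈ Metric.ball (0 : F') t, u y ∈ Metric.ball (0 : E') s)
    (hφu : ∀ y ∈ Metric.ball (0 : F') t, φ (u y) = y)
    (vt : F') (hvt : vt ∈ Metric.ball (0 : F') t) :
    DifferentiableAt ℂ u vt := by
  have hv : u vt ∈ Metric.ball (0 : E') s := hu vt hvt
  have hAt : DifferentiableAt ℂ φ (u vt) :=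
    hφdiff.differentiableAt (Metric.isOpen_ball.mem_nhds hv)
  obtain ⟨A, hA⟩ : ∃ A : E' →L[ℂ] F', HasFDerivAt φ A (u vt) := hAt
  have hAlow : ∀ w : E', c * ‖w‖ ≤ ‖A w‖ :=
    fderiv_lower_of_expand Metric.isOpen_ball hv hA hexp
  have hAinj : Function.Injective (A : E' →ₗ[ℂ] F') := by
    intro w₁ w₂ hw
    have h1 : A (w₁ - w₂) = 0 := by
      have : A w₁ = A w₂ := hw
      rw [map_sub, this, sub_self]
    have h2 := hAlow (w₁ - w₂)
    rw [h1, norm_zero] at h2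
    have h2' : c * ‖w₁ - w₂‖ ≤ c * 0 := by linarith
    have h3 : ‖w₁ - w₂‖ ≤ 0 := le_of_mul_le_mul_left h2' hc
    have h4 := le_antisymm h3 (norm_nonneg _)
    rwa [norm_eq_zero, sub_eq_zero] at h4
  have hAsurj : Function.Surjective (A : E' →ₗ[ℂ] F') :=
    (LinearMap.injective_iff_surjective_of_finrank_eq_finrank hdim).1 hAinj
  set eA : E' ≃ₗ[ℂ] F' := LinearEquiv.ofBijective (A : E' →ₗ[ℂ] F') ⟨hAinj, hAsurj⟩
    with heA_def
  set B : F' →L[ℂ] E' := LinearMap.toContinuousLinearMap (eA.symm : F' →ₗ[ℂ] E') with hB_def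
  have hBA : ∀ z : E', B (A z) = z := by
    intro z
    show (eA.symm : F' →ₗ[ℂ] E') (A z) = z
    exact eA.symm_apply_apply z
  clear_value B eA
  have hulip : ∀ y ∈ Metric.ball (0 : F') t, ‖u y - u vt‖ ≤ c⁻¹ * ‖y - vt‖ := by
    intro y hy
    have h3 := hexp (u y) (hu y hy) (u vt) hv
    rw [hφu y hy, hφu vt hvt] at h3
    rw [inv_mul_eq_div, le_div_iff₀ hc]
    linarith
  exact (inverse_hasFDerivAt (Metric.isOpen_ball.mem_nhds hvt) hBA hA
    (fun y hy => hφu y hy) hulip).differentiableAt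

/-- The graph `{v + h(v) : v ∈ E, ‖v‖ < s}` of a map `h : E → F` between subspaces of `ℂ^k`. -/
def graphOver {k : ℕ} (E F : Submodule ℂ (EuclideanSpace ℂ (Fin k))) (h : E → F) (s : ℝ) :
    Set (EuclideanSpace ℂ (Fin k)) :=
  (fun v : E => (v : EuclideanSpace ℂ (Fin k)) + (h v : EuclideanSpace ℂ (Fin k))) ''
    Metric.ball 0 s

set_option maxHeartbeats 2000000 in
theorem stmt_2 (k : ℕ) (hk : 1 ≤ k)
    (E F Et Ft : Submodule ℂ (EuclideanSpace ℂ (Fin k)))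
    (hEF : IsCompl E F) (hEtFt : IsCompl Et Ft)
    (hdim : Module.finrank ℂ E = Module.finrank ℂ Et)
    (a b κ ε s : ℝ) (ha : 0 < a) (hb : 0 < b) (hκ : 0 < κ) (hε : 0 < ε) (hs : 0 < s)
    (hba : b ≤ a) (hε1 : ε ≤ 1) (hκa : 2 * κ < a)
    (h : E → F) (hhol : DifferentiableOn ℂ h (Metric.ball 0 s)) (h0 : h 0 = 0)
    (hlip : ∀ v₁ ∈ Metric.ball (0 : E) s, ∀ v₂ ∈ Metric.ball (0 : E) s,
      ‖h v₁ - h v₂‖ ≤ ε * ‖v₁ - v₂‖)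
    (U : Set (EuclideanSpace ℂ (Fin k))) (hU : IsOpen U) (hΓU : graphOver E F h s ⊆ U)
    (g : EuclideanSpace ℂ (Fin k) → EuclideanSpace ℂ (Fin k))
    (hg : DifferentiableOn ℂ g U)
    (l : EuclideanSpace ℂ (Fin k) →ₗ[ℂ] EuclideanSpace ℂ (Fin k))
    (r : EuclideanSpace ℂ (Fin k) → EuclideanSpace ℂ (Fin k))
    (hglr : ∀ x, g x = l x + r x)
    (hlE : ∀ v ∈ E, l v ∈ Et) (hlF : ∀ u ∈ F, l u ∈ Ft)
    (hla : ∀ v ∈ E, a * ‖v‖ ≤ ‖l v‖) (hlb : ∀ u ∈ F, ‖l u‖ ≤ b * ‖u‖)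
    (hr0 : r 0 = 0)
    (hr' : ∀ x ∈ graphOver E F h s, ∀ y ∈ graphOver E F h s,
      ‖(Submodule.linearProjOfIsCompl Et Ft hEtFt (r x) : EuclideanSpace ℂ (Fin k)) -
        (Submodule.linearProjOfIsCompl Et Ft hEtFt (r y) : EuclideanSpace ℂ (Fin k))‖ ≤
        κ * ‖x - y‖)
    (hr'' : ∀ x ∈ graphOver E F h s, ∀ y ∈ graphOver E F h s,
      ‖(Submodule.linearProjOfIsCompl Ft Et hEtFt.symm (r x) : EuclideanSpace ℂ (Fin k)) -
        (Submodule.linearProjOfIsCompl Ft Et hEtFt.symm (r y) : EuclideanSpace ℂ (Fin k))‖ ≤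
        κ * ‖x - y‖) :
    ∃ ht : Et → Ft,
      DifferentiableOn ℂ ht (Metric.ball 0 ((a - 2 * κ) * s)) ∧ ht 0 = 0 ∧
      (∀ v₁ ∈ Metric.ball (0 : Et) ((a - 2 * κ) * s),
        ∀ v₂ ∈ Metric.ball (0 : Et) ((a - 2 * κ) * s),
          ‖ht v₁ - ht v₂‖ ≤ (b * ε + 2 * κ) / (a - 2 * κ) * ‖v₁ - v₂‖) ∧
      graphOver Et Ft ht ((a - 2 * κ) * s) ⊆ g '' graphOver E F h s := by
  classical
  set c : ℝ := a - 2 * κ with hc_def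
  have hc : 0 < c := by rw [hc_def]; linarith
  set πE : EuclideanSpace ℂ (Fin k) →L[ℂ] Et :=
    LinearMap.toContinuousLinearMap (Et.linearProjOfIsCompl Ft hEtFt) with hπE_def
  set πF : EuclideanSpace ℂ (Fin k) →L[ℂ] Ft :=
    LinearMap.toContinuousLinearMap (Ft.linearProjOfIsCompl Et hEtFt.symm) with hπF_def
  set x : E → EuclideanSpace ℂ (Fin k) :=
    fun v => (v : EuclideanSpace ℂ (Fin k)) + (h v : EuclideanSpace ℂ (Fin k)) with hx_def
  clear_value πE πF
  have hxdiff : DifferentiableOn ℂ x (Metric.ball (0 : E) s) := by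
    rw [hx_def]
    apply DifferentiableOn.add
    · exact (E.subtypeL.differentiable).differentiableOn
    · exact F.subtypeL.differentiable.comp_differentiableOn hhol
  have hxΓ : ∀ v ∈ Metric.ball (0 : E) s, x v ∈ graphOver E F h s := by
    rw [hx_def]; exact fun v hv => ⟨v, hv, rfl⟩
  have hx0 : x 0 = 0 := by rw [hx_def]; simp [h0]
  clear_value x
  have hxlip : ∀ v₁ ∈ Metric.ball (0 : E) s, ∀ v₂ ∈ Metric.ball (0 : E) s,
      ‖x v₁ - x v₂‖ ≤ 2 * ‖v₁ - v₂‖ := by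
    intro v₁ h1 v₂ h2
    have heq : x v₁ - x v₂ = ((v₁ - v₂ : E) : EuclideanSpace ℂ (Fin k)) +
        ((h v₁ - h v₂ : F) : EuclideanSpace ℂ (Fin k)) := by
      simp [hx_def]; abel
    rw [heq]
    have := norm_add_le ((v₁ - v₂ : E) : EuclideanSpace ℂ (Fin k))
      ((h v₁ - h v₂ : F) : EuclideanSpace ℂ (Fin k))
    have h3 : ‖((v₁ - v₂ : E) : EuclideanSpace ℂ (Fin k))‖ = ‖v₁ - v₂‖ :=
      (Submodule.coe_norm _).symm
    have h4 : ‖((h v₁ - h v₂ : F) : EuclideanSpace ℂ (Fin k))‖ = ‖h v₁ - h v₂‖ :=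
      (Submodule.coe_norm _).symm
    have h5 := hlip v₁ h1 v₂ h2
    have h6 : (0:ℝ) ≤ ‖v₁ - v₂‖ := norm_nonneg _
    have h7 : ε * ‖v₁ - v₂‖ ≤ 1 * ‖v₁ - v₂‖ := mul_le_mul_of_nonneg_right hε1 h6
    rw [h3, h4] at this
    linarith
  -- Lipschitz bounds for the projected remainders, as functions of the base point
  have hπrE : ∀ v₁ ∈ Metric.ball (0 : E) s, ∀ v₂ ∈ Metric.ball (0 : E) s,
      ‖πE (r (x v₁)) - πE (r (x v₂))‖ ≤ 2 * κ * ‖v₁ - v₂‖ := by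
    intro v₁ h1 v₂ h2
    have := hr' (x v₁) (hxΓ v₁ h1) (x v₂) (hxΓ v₂ h2)
    have heq : ‖πE (r (x v₁)) - πE (r (x v₂))‖ =
        ‖(Submodule.linearProjOfIsCompl Et Ft hEtFt (r (x v₁)) : EuclideanSpace ℂ (Fin k)) -
         (Submodule.linearProjOfIsCompl Et Ft hEtFt (r (x v₂)) : EuclideanSpace ℂ (Fin k))‖ := by
      rw [Submodule.coe_norm]; simp [hπE_def]
    rw [heq]
    calc _ ≤ κ * ‖x v₁ - x v₂‖ := this
      _ ≤ κ * (2 * ‖v₁ - v₂‖) := by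
          exact mul_le_mul_of_nonneg_left (hxlip v₁ h1 v₂ h2) (le_of_lt hκ)
      _ = 2 * κ * ‖v₁ - v₂‖ := by ring
  have hπrF : ∀ v₁ ∈ Metric.ball (0 : E) s, ∀ v₂ ∈ Metric.ball (0 : E) s,
      ‖πF (r (x v₁)) - πF (r (x v₂))‖ ≤ 2 * κ * ‖v₁ - v₂‖ := by
    intro v₁ h1 v₂ h2
    have := hr'' (x v₁) (hxΓ v₁ h1) (x v₂) (hxΓ v₂ h2)
    have heq : ‖πF (r (x v₁)) - πF (r (x v₂))‖ =
        ‖(Submodule.linearProjOfIsCompl Ft Et hEtFt.symm (r (x v₁)) : EuclideanSpace ℂ (Fin k)) -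
         (Submodule.linearProjOfIsCompl Ft Et hEtFt.symm (r (x v₂)) : EuclideanSpace ℂ (Fin k))‖ := by
      rw [Submodule.coe_norm]; simp [hπF_def]
    rw [heq]
    calc _ ≤ κ * ‖x v₁ - x v₂‖ := this
      _ ≤ κ * (2 * ‖v₁ - v₂‖) := by
          exact mul_le_mul_of_nonneg_left (hxlip v₁ h1 v₂ h2) (le_of_lt hκ)
      _ = 2 * κ * ‖v₁ - v₂‖ := by ring
  -- the linear parts restricted to the subspaces
  set lE₀ : E →ₗ[ℂ] Et := LinearMap.codRestrict Et (l ∘ₗ E.subtype)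
    (fun v => hlE v v.2) with hlE₀_def
  set lF₀ : F →ₗ[ℂ] Ft := LinearMap.codRestrict Ft (l ∘ₗ F.subtype)
    (fun u => hlF u u.2) with hlF₀_def
  have hlE₀norm : ∀ v : E, a * ‖v‖ ≤ ‖lE₀ v‖ := by
    intro v
    rw [Submodule.coe_norm]
    simp [hlE₀_def, Submodule.coe_norm]; exact hla v v.2
  have hlF₀norm : ∀ u : F, ‖lF₀ u‖ ≤ b * ‖u‖ := by
    intro u
    rw [Submodule.coe_norm]
    simp [hlF₀_def, Submodule.coe_norm]; exact hlb u u.2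
  clear_value lE₀ lF₀
  -- the transformed graph map over Et
  set φ : E → Et := fun v => πE (g (x v)) with hφ_def
  have hφdiff : DifferentiableOn ℂ φ (Metric.ball (0 : E) s) := by
    rw [hφ_def]
    apply (πE.differentiable).comp_differentiableOn
    exact hg.comp hxdiff (fun v hv => hΓU (hxΓ v hv))
  have hφeq : ∀ v : E, φ v = lE₀ v + πE (r (x v)) := by
    intro v
    apply Subtype.ext
    have hg' : g (x v) = l ↑v + l ↑(h v) + r (x v) := by rw [hglr (x v), hx_def]; simp
    rw [hφ_def]
    simp only [hπE_def, LinearMap.coe_toContinuousLinearMap', hg', map_add]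
    have e1 : Submodule.linearProjOfIsCompl Et Ft hEtFt (l ↑v) = ⟨l ↑v, hlE _ v.2⟩ :=
      Submodule.linearProjOfIsCompl_apply_left hEtFt ⟨l ↑v, hlE _ v.2⟩
    have e2 : Submodule.linearProjOfIsCompl Et Ft hEtFt (l ↑(h v)) = 0 :=
      Submodule.projectionOnto_apply_of_mem_right hEtFt (hlF _ (h v).2)
    rw [e1, e2]
    simp [hlE₀_def]; rfl
  have hψeq : ∀ v : E, πF (g (x v)) = lF₀ (h v) + πF (r (x v)) := by
    intro v
    apply Subtype.ext
    have hg' : g (x v) = l ↑v + l ↑(h v) + r (x v) := by rw [hglr (x v), hx_def]; simp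
    simp only [hπF_def, LinearMap.coe_toContinuousLinearMap', hg', map_add]
    have e1 : Submodule.linearProjOfIsCompl Ft Et hEtFt.symm (l ↑v) = 0 :=
      Submodule.projectionOnto_apply_of_mem_right hEtFt.symm (hlE _ v.2)
    have e2 : Submodule.linearProjOfIsCompl Ft Et hEtFt.symm (l ↑(h v)) =
        ⟨l ↑(h v), hlF _ (h v).2⟩ :=
      Submodule.linearProjOfIsCompl_apply_left hEtFt.symm ⟨l ↑(h v), hlF _ (h v).2⟩
    rw [e1, e2]
    simp [hlF₀_def]; rfl
  have hφ0 : φ 0 = 0 := by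
    have hg0 : g 0 = 0 := by rw [hglr 0, hr0]; simp
    rw [hφ_def]; simp only [hx0, hg0, map_zero]
  clear_value φ
  -- the expansion estimate for φ
  have hexp : ∀ v₁ ∈ Metric.ball (0 : E) s, ∀ v₂ ∈ Metric.ball (0 : E) s,
      c * ‖v₁ - v₂‖ ≤ ‖φ v₁ - φ v₂‖ := by
    intro v₁ h1 v₂ h2
    have heq : lE₀ (v₁ - v₂) = (φ v₁ - φ v₂) - (πE (r (x v₁)) - πE (r (x v₂))) := by
      rw [hφeq v₁, hφeq v₂, map_sub]; abel
    have h3 : ‖lE₀ (v₁ - v₂)‖ ≤ ‖φ v₁ - φ v₂‖ + ‖πE (r (x v₁)) - πE (r (x v₂))‖ := by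
      rw [heq]; exact norm_sub_le _ _
    have h4 := hlE₀norm (v₁ - v₂)
    have h5 := hπrE v₁ h1 v₂ h2
    rw [hc_def]; linarith
  -- the inverse of lE₀
  have hlE₀inj : Function.Injective lE₀ := by
    intro v w hvw
    have h1 : lE₀ (v - w) = 0 := by rw [map_sub, hvw, sub_self]
    have h2 := hlE₀norm (v - w)
    rw [h1, norm_zero] at h2
    have h2' : a * ‖v - w‖ ≤ a * 0 := by linarith
    have h3 : ‖v - w‖ ≤ 0 := le_of_mul_le_mul_left h2' ha
    have h4 := le_antisymm h3 (norm_nonneg _)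
    rwa [norm_eq_zero, sub_eq_zero] at h4
  have hlE₀surj : Function.Surjective lE₀ :=
    (LinearMap.injective_iff_surjective_of_finrank_eq_finrank hdim).1 hlE₀inj
  set eL : E ≃ₗ[ℂ] Et := LinearEquiv.ofBijective lE₀ ⟨hlE₀inj, hlE₀surj⟩ with heL_def
  have heLapp : ∀ v : E, eL v = lE₀ v := fun v => rfl
  clear_value eL
  have heLsymm_norm : ∀ w : Et, ‖eL.symm w‖ ≤ ‖w‖ / a := by
    intro w
    have h1 : lE₀ (eL.symm w) = w := by
      have := eL.apply_symm_apply w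
      rwa [heLapp] at this
    have h2 := hlE₀norm (eL.symm w)
    rw [h1] at h2
    rw [le_div_iff₀ ha]
    linarith
  -- existence of the fixed point giving the inverse of φ
  have hfix : ∀ vt : Et, ‖vt‖ < c * s → ∃ v : E, ‖v‖ ≤ ‖vt‖ / c ∧ φ v = vt := by
    intro vt hvt
    obtain ⟨v, hv1, hv2⟩ := fix_aux eL (fun v => πE (r (x v))) a κ s ha hκ hκa hs
      heLsymm_norm hπrE (by show πE (r (x 0)) = 0; rw [hx0, hr0, map_zero]) vt (by rw [← hc_def]; exact hvt)
    refine ⟨v, by rwa [← hc_def] at hv1, ?_⟩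
    rw [hφeq, ← heLapp]
    exact hv2
  have hchoice : ∀ vt : Et, ∃ v : E, ‖vt‖ < c * s → (‖v‖ ≤ ‖vt‖ / c ∧ φ v = vt) := by
    intro vt
    by_cases hvt : ‖vt‖ < c * s
    · obtain ⟨v, h1, h2⟩ := hfix vt hvt
      exact ⟨v, fun _ => ⟨h1, h2⟩⟩
    · exact ⟨0, fun hh => absurd hh hvt⟩
  choose vmap hvmap using hchoice
  have hvball : ∀ vt ∈ Metric.ball (0 : Et) (c * s), vmap vt ∈ Metric.ball (0 : E) s := by
    intro vt hvt
    rw [Metric.mem_ball, dist_zero_right] at hvt ⊢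
    have h1 := (hvmap vt hvt).1
    have h2 : ‖vt‖ / c < s := by rw [div_lt_iff₀ hc]; linarith
    linarith
  have hφv : ∀ vt ∈ Metric.ball (0 : Et) (c * s), φ (vmap vt) = vt := by
    intro vt hvt
    rw [Metric.mem_ball, dist_zero_right] at hvt
    exact (hvmap vt hvt).2
  have hvlip : ∀ vt₁ ∈ Metric.ball (0 : Et) (c * s), ∀ vt₂ ∈ Metric.ball (0 : Et) (c * s),
      ‖vmap vt₁ - vmap vt₂‖ ≤ c⁻¹ * ‖vt₁ - vt₂‖ := by
    intro vt₁ h1 vt₂ h2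
    have h3 := hexp (vmap vt₁) (hvball vt₁ h1) (vmap vt₂) (hvball vt₂ h2)
    rw [hφv vt₁ h1, hφv vt₂ h2] at h3
    rw [inv_mul_eq_div, le_div_iff₀ hc]
    linarith
  have hcs : 0 < c * s := by positivity
  have h0mem : (0 : Et) ∈ Metric.ball (0 : Et) (c * s) := by simp [hcs]
  have hvmap0 : vmap 0 = 0 := by
    have h1 := (hvmap 0 (by simpa using hcs)).1
    simp only [norm_zero, zero_div] at h1
    exact norm_le_zero_iff.1 h1
  -- the candidate map
  refine ⟨fun vt => πF (g (x (vmap vt))), ?_, ?_, ?_, ?_⟩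
  · -- differentiability
    intro vt hvt
    apply DifferentiableAt.differentiableWithinAt
    have hvt' : vt ∈ Metric.ball (0 : Et) (c * s) := hvt
    have hv : vmap vt ∈ Metric.ball (0 : E) s := hvball vt hvt'
    have hudiff : DifferentiableAt ℂ vmap vt :=
      inv_differentiableAt hdim φ vmap s (c * s) c hc hφdiff hexp hvball hφv vt hvt'
    have hxdiffAt : DifferentiableAt ℂ x (vmap vt) :=
      hxdiff.differentiableAt (Metric.isOpen_ball.mem_nhds hv)
    have hgdiffAt : DifferentiableAt ℂ g (x (vmap vt)) :=
      hg.differentiableAt (hU.mem_nhds (hΓU (hxΓ _ hv)))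
    exact (πF.differentiable.differentiableAt).comp _
      ((hgdiffAt.comp _ hxdiffAt).comp _ hudiff)
  · -- value at zero
    have hg0 : g 0 = 0 := by rw [hglr 0, hr0]; simp
    simp [hvmap0, hx0, hg0]
  · -- Lipschitz estimate
    intro vt₁ h1 vt₂ h2
    have hv1 : vmap vt₁ ∈ Metric.ball (0 : E) s := hvball vt₁ h1
    have hv2 : vmap vt₂ ∈ Metric.ball (0 : E) s := hvball vt₂ h2
    have heq : πF (g (x (vmap vt₁))) - πF (g (x (vmap vt₂))) =
        lF₀ (h (vmap vt₁) - h (vmap vt₂)) + (πF (r (x (vmap vt₁))) - πF (r (x (vmap vt₂)))) := by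
      rw [hψeq, hψeq, map_sub]; abel
    rw [heq]
    have hb1 : ‖lF₀ (h (vmap vt₁) - h (vmap vt₂))‖ ≤ b * (ε * ‖vmap vt₁ - vmap vt₂‖) := by
      calc ‖lF₀ (h (vmap vt₁) - h (vmap vt₂))‖ ≤ b * ‖h (vmap vt₁) - h (vmap vt₂)‖ :=
            hlF₀norm _
        _ ≤ b * (ε * ‖vmap vt₁ - vmap vt₂‖) :=
            mul_le_mul_of_nonneg_left (hlip _ hv1 _ hv2) (le_of_lt hb)
    have hb2 := hπrF _ hv1 _ hv2
    have hb3 := hvlip vt₁ h1 vt₂ h2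
    calc ‖lF₀ (h (vmap vt₁) - h (vmap vt₂)) +
          (πF (r (x (vmap vt₁))) - πF (r (x (vmap vt₂))))‖
        ≤ ‖lF₀ (h (vmap vt₁) - h (vmap vt₂))‖ +
          ‖πF (r (x (vmap vt₁))) - πF (r (x (vmap vt₂)))‖ := norm_add_le _ _
      _ ≤ (b * ε + 2 * κ) * ‖vmap vt₁ - vmap vt₂‖ := by
          have hr : (b * ε + 2 * κ) * ‖vmap vt₁ - vmap vt₂‖ =
              b * (ε * ‖vmap vt₁ - vmap vt₂‖) + 2 * κ * ‖vmap vt₁ - vmap vt₂‖ := by ring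
          linarith
      _ ≤ (b * ε + 2 * κ) * (c⁻¹ * ‖vt₁ - vt₂‖) := by
          apply mul_le_mul_of_nonneg_left hb3
          positivity
      _ = (b * ε + 2 * κ) / c * ‖vt₁ - vt₂‖ := by
          rw [div_eq_mul_inv]; ring
  · -- graph containment
    rintro y ⟨vt, hvt, rfl⟩
    rw [Metric.mem_ball] at hvt
    have hvt' : vt ∈ Metric.ball (0 : Et) (c * s) := by
      rw [Metric.mem_ball]; exact hvt
    have hv : vmap vt ∈ Metric.ball (0 : E) s := hvball vt hvt'
    refine ⟨x (vmap vt), hxΓ _ hv, ?_⟩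
    have hdecomp : ((πE (g (x (vmap vt))) : EuclideanSpace ℂ (Fin k))) +
        ((πF (g (x (vmap vt))) : EuclideanSpace ℂ (Fin k))) = g (x (vmap vt)) := by
      rw [hπE_def, hπF_def]; exact
        Submodule.projection_add_projection_eq_self hEtFt (g (x (vmap vt)))
    have hφvt : πE (g (x (vmap vt))) = vt := by
      have h5 := hφv vt hvt'
      simp only [hφ_def] at h5
      exact h5
    show g (x (vmap vt)) = ↑vt + ↑(πF (g (x (vmap vt))))
    calc g (x (vmap vt))
        = ↑(πE (g (x (vmap vt)))) + ↑(πF (g (x (vmap vt)))) := hdecomp.symm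
      _ = ↑vt + ↑(πF (g (x (vmap vt)))) := by rw [hφvt]
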